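/- Let k be a perfect field with absolute Galois group G, and let P_1,...,P_n be multilinear forms over k with r̄ := prk_{k̄}(P_1,...,P_n). Suppose the single-form bound prk_k(P') ≤ Ã(prk_{k̄}(P') + 1)^{B̃} holds for every multilinear form P' over k. Then prk_k(P_1,...,P_n) ≤ Ã(n·r̄ + 1)^{B̃}. -/

import Mathlib

open scoped BigOperators

/-- A multilinear form has partition rank one if it factors as a product of two
multilinear forms on complementary nonempty subsets of the coordinates. -/
def IsPartRankOne {k : Type*} [Field k] {d : ℕ} {V : Fin d → Type*}
    [∀ i, AddCommGroup (V i)] [∀ i, Module k (V i)]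
    (P : MultilinearMap k V k) : Prop :=
  ∃ I : Set (Fin d), I.Nonempty ∧ Iᶜ.Nonempty ∧
    ∃ (R : MultilinearMap k (fun i : I => V i.1) k)
      (S : MultilinearMap k (fun j : ↥Iᶜ => V j.1) k),
      ∀ x : (∀ i, V i), P x = R (fun i => x i.1) * S (fun j => x j.1)

/-- `P` is a sum of `r` partition-rank-one multilinear forms. -/
def HasPrkDecomp {k : Type*} [Field k] {d : ℕ} {V : Fin d → Type*}
    [∀ i, AddCommGroup (V i)] [∀ i, Module k (V i)]
    (P : MultilinearMap k V k) (r : ℕ) : Prop :=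
  ∃ Q : Fin r → MultilinearMap k V k, (∀ i, IsPartRankOne (Q i)) ∧ P = ∑ i, Q i

/-- The partition rank of a multilinear form. -/
noncomputable def prk {k : Type*} [Field k] {d : ℕ} {V : Fin d → Type*}
    [∀ i, AddCommGroup (V i)] [∀ i, Module k (V i)]
    (P : MultilinearMap k V k) : ℕ :=
  sInf {r | HasPrkDecomp P r}

/-- The collective partition rank of a family of multilinear forms: the minimum partition
rank over nontrivial linear combinations. -/
noncomputable def cprk {k : Type*} [Field k] {d : ℕ} {V : Fin d → Type*}
    [∀ i, AddCommGroup (V i)] [∀ i, Module k (V i)]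
    {ι : Type*} [Fintype ι] (P : ι → MultilinearMap k V k) : ℕ :=
  sInf {r | ∃ a : ι → k, a ≠ 0 ∧ HasPrkDecomp (∑ i, a i • P i) r}

/-- Base change of a multilinear form on coordinate spaces over `k` to an extension
field `K`, via its coefficient tensor. -/
noncomputable def extendForm {k : Type*} [Field k] {d : ℕ} {s : Fin d → ℕ}
    (K : Type*) [Field K] [Algebra k K]
    (P : MultilinearMap k (fun i : Fin d => Fin (s i) → k) k) :
    MultilinearMap K (fun i : Fin d => Fin (s i) → K) K :=
  ∑ kv : (∀ i : Fin d, Fin (s i)),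
    (MultilinearMap.mkPiRing K (Fin d)
      (algebraMap k K (P (fun i => Pi.single (kv i) 1)))).compLinearMap
      (fun i => LinearMap.proj (kv i))

/-! ### Auxiliary lemmas -/

section FixedPoints

theorem AuxGD.fixed_mem_range {k : Type*} [Field k] [PerfectField k] (x : AlgebraicClosure k)
    (h : ∀ σ : AlgebraicClosure k ≃ₐ[k] AlgebraicClosure k, σ x = x) :
    x ∈ (algebraMap k (AlgebraicClosure k)).range := by
  by_contra hx
  have hsep : IsSeparable k x :=
    PerfectField.separable_of_irreducible
      (minpoly.irreducible (Algebra.IsIntegral.isIntegral (R := k) x))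
  have hsp : ((minpoly k x).map (algebraMap k (AlgebraicClosure k))).Splits :=
    IsAlgClosed.splits _
  have hb : x ∉ (⊥ : Subalgebra k (AlgebraicClosure k)) := by rwa [Algebra.mem_bot]
  obtain ⟨y, hne, hconj⟩ := (notMem_iff_exists_ne_and_isConjRoot hsep hsp).mp hb
  obtain ⟨σ, hσ⟩ := hconj.symm.exists_algEquiv
  exact hne ((h σ).symm.trans hσ)

end FixedPoints

section PrkBasics

variable {k : Type*} [Field k] {d : ℕ} {V : Fin d → Type*}
    [∀ i, AddCommGroup (V i)] [∀ i, Module k (V i)]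

lemma AuxGD.isPartRankOne_zero (hd : 2 ≤ d) : IsPartRankOne (0 : MultilinearMap k V k) := by
  refine ⟨{⟨0, by omega⟩}, ⟨⟨0, by omega⟩, rfl⟩, ⟨⟨1, by omega⟩, ?_⟩, 0, 0, by simp⟩
  simp only [Set.mem_compl_iff, Set.mem_singleton_iff]
  intro hmem
  have := Fin.mk.injEq (n := d) 1 (by omega) 0 (by omega) ▸ hmem
  omega

lemma AuxGD.isPartRankOne_smul (c : k) {P : MultilinearMap k V k} (h : IsPartRankOne P) :
    IsPartRankOne (c • P) := by
  obtain ⟨I, hI, hIc, R, S, hRS⟩ := h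
  exact ⟨I, hI, hIc, c • R, S, fun x => by simp [hRS x, mul_assoc]⟩

lemma AuxGD.hasPrkDecomp_add {P P' : MultilinearMap k V k} {r r' : ℕ}
    (h : HasPrkDecomp P r) (h' : HasPrkDecomp P' r') : HasPrkDecomp (P + P') (r + r') := by
  obtain ⟨Q, hQ, rfl⟩ := h
  obtain ⟨Q', hQ', rfl⟩ := h'
  refine ⟨Fin.append Q Q', fun i => ?_, ?_⟩
  · refine Fin.addCases (fun i => ?_) (fun i => ?_) i
    · simpa using hQ i
    · simpa using hQ' i
  · rw [Fin.sum_univ_add]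
    simp

lemma AuxGD.hasPrkDecomp_zero : HasPrkDecomp (0 : MultilinearMap k V k) 0 :=
  ⟨fun i => i.elim0, fun i => i.elim0, by simp⟩

lemma AuxGD.hasPrkDecomp_smul (c : k) {P : MultilinearMap k V k} {r : ℕ}
    (h : HasPrkDecomp P r) : HasPrkDecomp (c • P) r := by
  obtain ⟨Q, hQ, rfl⟩ := h
  exact ⟨fun i => c • Q i, fun i => AuxGD.isPartRankOne_smul c (hQ i), by rw [Finset.smul_sum]⟩

lemma AuxGD.hasPrkDecomp_mono (hd : 2 ≤ d) {P : MultilinearMap k V k} {r r' : ℕ}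
    (h : HasPrkDecomp P r) (hrr : r ≤ r') : HasPrkDecomp P r' := by
  obtain ⟨m, rfl⟩ := Nat.exists_eq_add_of_le hrr
  have hz : HasPrkDecomp (0 : MultilinearMap k V k) m :=
    ⟨fun _ => 0, fun _ => AuxGD.isPartRankOne_zero hd, by simp⟩
  simpa using AuxGD.hasPrkDecomp_add h hz

lemma AuxGD.hasPrkDecomp_sum (hd : 2 ≤ d) {ι : Type*} [DecidableEq ι] (t : Finset ι)
    (f : ι → MultilinearMap k V k) (r : ℕ) (h : ∀ j ∈ t, HasPrkDecomp (f j) r) :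
    HasPrkDecomp (∑ j ∈ t, f j) (t.card * r) := by
  induction t using Finset.induction with
  | empty => simpa using AuxGD.hasPrkDecomp_zero
  | @insert a tt hj ih =>
    rw [Finset.sum_insert hj]
    have h2 := AuxGD.hasPrkDecomp_add (h a (Finset.mem_insert_self a tt))
      (ih fun j hjt => h j (Finset.mem_insert_of_mem hjt))
    refine AuxGD.hasPrkDecomp_mono hd h2 ?_
    rw [Finset.card_insert_of_notMem hj, add_mul, one_mul, add_comm]

end PrkBasics

section Monomials

variable {K : Type*} [Field K] {d : ℕ} {s : Fin d → ℕ}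

/-- The monomial multilinear form with coefficient `c` at the multi-index `kv`. -/
noncomputable def AuxGD.monForm (kv : ∀ i : Fin d, Fin (s i)) (c : K) :
    MultilinearMap K (fun i : Fin d => Fin (s i) → K) K :=
  (MultilinearMap.mkPiRing K (Fin d) c).compLinearMap (fun i => LinearMap.proj (kv i))

lemma AuxGD.monForm_apply (kv : ∀ i : Fin d, Fin (s i)) (c : K) (x : ∀ i, Fin (s i) → K) :
    AuxGD.monForm kv c x = (∏ i, x i (kv i)) * c := by
  simp [AuxGD.monForm, MultilinearMap.mkPiRing_apply, smul_eq_mul]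

lemma AuxGD.eq_sum_monForm (P : MultilinearMap K (fun i : Fin d => Fin (s i) → K) K) :
    P = ∑ kv : (∀ i : Fin d, Fin (s i)),
      AuxGD.monForm kv (P fun i => Pi.single (kv i) 1) := by
  apply MultilinearMap.ext; intro x
  have hx : ∀ i, x i = ∑ j : Fin (s i), x i j • (Pi.single j 1 : Fin (s i) → K) := by
    intro i
    ext j'
    simp [Pi.single_apply]
  calc P x = P (fun i => ∑ j : Fin (s i), x i j • (Pi.single j 1 : Fin (s i) → K)) := by
        congr 1; ext i; rw [← hx i]
    _ = ∑ kv : (∀ i : Fin d, Fin (s i)),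
          P (fun i => x i (kv i) • (Pi.single (kv i) 1 : Fin (s i) → K)) := by
        rw [MultilinearMap.map_sum]
    _ = ∑ kv : (∀ i : Fin d, Fin (s i)),
          (∏ i, x i (kv i)) • P (fun i => (Pi.single (kv i) 1 : Fin (s i) → K)) := by
        refine Finset.sum_congr rfl fun kv _ => ?_
        rw [MultilinearMap.map_smul_univ]
    _ = _ := by
        simp only [MultilinearMap.sum_apply, AuxGD.monForm_apply, smul_eq_mul]

lemma AuxGD.isPartRankOne_monForm (hd : 2 ≤ d) (kv : ∀ i : Fin d, Fin (s i)) (c : K) :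
    IsPartRankOne (AuxGD.monForm kv c) := by
  classical
  set I : Set (Fin d) := {x | x = ⟨0, by omega⟩} with hIdef
  refine ⟨I, ⟨⟨0, by omega⟩, rfl⟩, ⟨⟨1, by omega⟩, ?_⟩, ?_⟩
  · intro hmem
    rw [hIdef] at hmem
    simp only [Set.mem_setOf_eq, Fin.mk.injEq] at hmem
    omega
  refine ⟨(MultilinearMap.mkPiRing K ↥I c).compLinearMap (fun i => LinearMap.proj (kv i.1)),
    (MultilinearMap.mkPiRing K ↥Iᶜ 1).compLinearMap (fun j => LinearMap.proj (kv j.1)), ?_⟩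
  intro x
  rw [AuxGD.monForm_apply]
  simp only [MultilinearMap.compLinearMap_apply, MultilinearMap.mkPiRing_apply,
    LinearMap.proj_apply, smul_eq_mul, mul_one]
  rw [← Fintype.prod_subtype_mul_prod_subtype (fun i => i ∈ I) (fun i => x i (kv i))]
  have h2 : ∏ i : ↥Iᶜ, x i.1 (kv i.1) = ∏ i : {y // ¬ y ∈ I}, x i.1 (kv i.1) :=
    Fintype.prod_equiv (Equiv.subtypeEquivRight fun y => Iff.rfl) _ _ fun i => rfl
  rw [h2]
  ring

lemma AuxGD.exists_hasPrkDecomp (hd : 2 ≤ d)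
    (P : MultilinearMap K (fun i : Fin d => Fin (s i) → K) K) :
    ∃ r, HasPrkDecomp P r := by
  classical
  set N := Fintype.card (∀ i : Fin d, Fin (s i)) with hN
  set e := (Fintype.equivFin (∀ i : Fin d, Fin (s i))).symm with he
  refine ⟨N, fun j => AuxGD.monForm (e j) (P fun i => Pi.single (e j i) 1),
    fun j => AuxGD.isPartRankOne_monForm hd _ _, ?_⟩
  conv_lhs => rw [AuxGD.eq_sum_monForm P]
  exact (Equiv.sum_comp e fun kv => AuxGD.monForm kv (P fun i => Pi.single (kv i) 1)).symm

lemma AuxGD.hasPrkDecomp_prk (hd : 2 ≤ d)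
    (P : MultilinearMap K (fun i : Fin d => Fin (s i) → K) K) :
    HasPrkDecomp P (prk P) :=
  Nat.sInf_mem (AuxGD.exists_hasPrkDecomp hd P)

lemma AuxGD.prk_le {P : MultilinearMap K (fun i : Fin d => Fin (s i) → K) K} {r : ℕ}
    (h : HasPrkDecomp P r) : prk P ≤ r :=
  Nat.sInf_le h

end Monomials

section Conj

variable {K : Type*} [Field K] {ι : Type*} {κ : ι → Type*}

/-- Coefficientwise application of a field automorphism to a multilinear form on
coordinate spaces. -/
def AuxGD.conjForm (σ : K ≃+* K) (Q : MultilinearMap K (fun i : ι => κ i → K) K) :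
    MultilinearMap K (fun i : ι => κ i → K) K where
  toFun x := σ (Q fun i j => σ.symm (x i j))
  map_update_add' := by
    intro _ m i a b
    have h : ∀ v : κ i → K,
        (fun i' j => σ.symm (Function.update m i v i' j))
          = Function.update (fun i' j => σ.symm (m i' j)) i (fun j => σ.symm (v j)) := by
      intro v
      funext i'
      exact Function.apply_update (fun i'' (w : κ i'' → K) (j : κ i'') => σ.symm (w j)) m i v i'
    rw [h, h, h]
    have : (fun j => σ.symm ((a + b) j)) = (fun j => σ.symm (a j)) + (fun j => σ.symm (b j)) := by
      funext j; simp
    rw [this, Q.map_update_add, map_add]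
  map_update_smul' := by
    intro _ m i c a
    have h : ∀ v : κ i → K,
        (fun i' j => σ.symm (Function.update m i v i' j))
          = Function.update (fun i' j => σ.symm (m i' j)) i (fun j => σ.symm (v j)) := by
      intro v
      funext i'
      exact Function.apply_update (fun i'' (w : κ i'' → K) (j : κ i'') => σ.symm (w j)) m i v i'
    rw [h, h]
    have : (fun j => σ.symm ((c • a) j)) = σ.symm c • (fun j => σ.symm (a j)) := by
      funext j; simp [mul_comm]
    rw [this, Q.map_update_smul, smul_eq_mul, smul_eq_mul, map_mul, RingEquiv.apply_symm_apply]

@[simp] lemma AuxGD.conjForm_apply (σ : K ≃+* K)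
    (Q : MultilinearMap K (fun i : ι => κ i → K) K)
    (x : ∀ i : ι, κ i → K) : AuxGD.conjForm σ Q x = σ (Q fun i j => σ.symm (x i j)) := rfl

lemma AuxGD.conjForm_add (σ : K ≃+* K) (Q Q' : MultilinearMap K (fun i : ι => κ i → K) K) :
    AuxGD.conjForm σ (Q + Q') = AuxGD.conjForm σ Q + AuxGD.conjForm σ Q' := by
  apply MultilinearMap.ext; intro x; simp

lemma AuxGD.conjForm_zero (σ : K ≃+* K) :
    AuxGD.conjForm σ (0 : MultilinearMap K (fun i : ι => κ i → K) K) = 0 := by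
  apply MultilinearMap.ext; intro x; simp

lemma AuxGD.conjForm_smul (σ : K ≃+* K) (c : K)
    (Q : MultilinearMap K (fun i : ι => κ i → K) K) :
    AuxGD.conjForm σ (c • Q) = σ c • AuxGD.conjForm σ Q := by
  apply MultilinearMap.ext; intro x; simp

lemma AuxGD.conjForm_sum (σ : K ≃+* K) {α : Type*} (t : Finset α)
    (f : α → MultilinearMap K (fun i : ι => κ i → K) K) :
    AuxGD.conjForm σ (∑ j ∈ t, f j) = ∑ j ∈ t, AuxGD.conjForm σ (f j) :=
  map_sum (AddMonoidHom.mk' (AuxGD.conjForm σ) (AuxGD.conjForm_add σ)) f t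

end Conj

section ConjPi

variable {K : Type*} [Field K] {d : ℕ} {s : Fin d → ℕ}

lemma AuxGD.conjForm_isPartRankOne (σ : K ≃+* K)
    {Q : MultilinearMap K (fun i : Fin d => Fin (s i) → K) K} (h : IsPartRankOne Q) :
    IsPartRankOne (AuxGD.conjForm σ Q) := by
  obtain ⟨I, hI, hIc, R, S, hRS⟩ := h
  refine ⟨I, hI, hIc, AuxGD.conjForm σ R, AuxGD.conjForm σ S, fun x => ?_⟩
  simp only [AuxGD.conjForm_apply]
  rw [hRS, map_mul]

lemma AuxGD.conjForm_hasPrkDecomp (σ : K ≃+* K)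
    {Q : MultilinearMap K (fun i : Fin d => Fin (s i) → K) K} {r : ℕ}
    (h : HasPrkDecomp Q r) : HasPrkDecomp (AuxGD.conjForm σ Q) r := by
  obtain ⟨F, hF, rfl⟩ := h
  exact ⟨fun i => AuxGD.conjForm σ (F i),
    fun i => AuxGD.conjForm_isPartRankOne σ (hF i), by rw [AuxGD.conjForm_sum]⟩

lemma AuxGD.conjForm_monForm (σ : K ≃+* K) (kv : ∀ i : Fin d, Fin (s i)) (c : K) :
    AuxGD.conjForm σ (AuxGD.monForm kv c) = AuxGD.monForm kv (σ c) := by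
  apply MultilinearMap.ext; intro x
  simp only [AuxGD.conjForm_apply, AuxGD.monForm_apply, map_mul, map_prod,
    RingEquiv.apply_symm_apply]

end ConjPi

section ExtendFormLemmas

variable {k : Type*} [Field k] {d : ℕ} {s : Fin d → ℕ}
variable {K : Type*} [Field K] [Algebra k K]

lemma AuxGD.extendForm_eq (P : MultilinearMap k (fun i : Fin d => Fin (s i) → k) k) :
    extendForm K P = ∑ kv : (∀ i : Fin d, Fin (s i)),
      AuxGD.monForm kv (algebraMap k K (P fun i => Pi.single (kv i) 1)) := rfl

lemma AuxGD.conjForm_extendForm (σ : K ≃ₐ[k] K)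
    (P : MultilinearMap k (fun i : Fin d => Fin (s i) → k) k) :
    AuxGD.conjForm (σ : K ≃+* K) (extendForm K P) = extendForm K P := by
  rw [AuxGD.extendForm_eq, AuxGD.conjForm_sum]
  refine Finset.sum_congr rfl fun kv _ => ?_
  rw [AuxGD.conjForm_monForm]
  congr 1
  exact σ.commutes _

lemma AuxGD.monForm_coeff_sum {α : Type*} (t : Finset α) (g : α → K)
    (kv : ∀ i : Fin d, Fin (s i)) :
    AuxGD.monForm kv (∑ j ∈ t, g j) = ∑ j ∈ t, AuxGD.monForm kv (g j) := by
  apply MultilinearMap.ext; intro x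
  simp [AuxGD.monForm_apply, Finset.mul_sum]

lemma AuxGD.monForm_coeff_mul (b c : K) (kv : ∀ i : Fin d, Fin (s i)) :
    AuxGD.monForm kv (b * c) = b • AuxGD.monForm kv c := by
  apply MultilinearMap.ext; intro x
  simp only [AuxGD.monForm_apply, MultilinearMap.smul_apply, smul_eq_mul]
  ring

lemma AuxGD.extendForm_sum_smul {n : ℕ} (a : Fin n → k)
    (P : Fin n → MultilinearMap k (fun i : Fin d => Fin (s i) → k) k) :
    extendForm K (∑ l, a l • P l)
      = ∑ l, algebraMap k K (a l) • extendForm K (P l) := by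
  simp only [AuxGD.extendForm_eq]
  calc (∑ kv : (∀ i : Fin d, Fin (s i)),
        AuxGD.monForm kv (algebraMap k K ((∑ l, a l • P l) fun i => Pi.single (kv i) 1)))
      = ∑ kv : (∀ i : Fin d, Fin (s i)), ∑ l,
          algebraMap k K (a l) • AuxGD.monForm kv
            (algebraMap k K ((P l) fun i => Pi.single (kv i) 1)) := by
        refine Finset.sum_congr rfl fun kv _ => ?_
        have hL : ((∑ l, a l • P l) fun i => Pi.single (kv i) 1)
            = ∑ l, a l * ((P l) fun i => Pi.single (kv i) 1) := by simp
        rw [hL, map_sum, AuxGD.monForm_coeff_sum]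
        refine Finset.sum_congr rfl fun l _ => ?_
        rw [map_mul, AuxGD.monForm_coeff_mul]
    _ = ∑ l, ∑ kv : (∀ i : Fin d, Fin (s i)),
          algebraMap k K (a l) • AuxGD.monForm kv
            (algebraMap k K ((P l) fun i => Pi.single (kv i) 1)) := Finset.sum_comm
    _ = _ := by
        refine Finset.sum_congr rfl fun l _ => ?_
        rw [Finset.smul_sum]

end ExtendFormLemmas

section RationalVector

variable {k : Type*} [Field k] [PerfectField k]

local notation "K" => AlgebraicClosure k

lemma AuxGD.exists_rational_vector {n : ℕ}
    (abar : Fin n → K) (habar : abar ≠ 0) :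
    ∃ b : Fin n → k, b ≠ 0 ∧
      (fun i => algebraMap k K (b i)) ∈
        Submodule.span K
          {v : Fin n → K | ∃ σ : K ≃ₐ[k] K, v = fun i => σ (abar i)} := by
  classical
  set O : Set (Fin n → K) :=
    {v : Fin n → K | ∃ σ : K ≃ₐ[k] K, v = fun i => σ (abar i)} with hO
  set W := Submodule.span K O with hW
  have hstab : ∀ (σ : K ≃ₐ[k] K) (w : Fin n → K), w ∈ W → (fun i => σ (w i)) ∈ W := by
    intro σ w hw
    refine Submodule.span_induction (p := fun w _ => (fun i => σ (w i)) ∈ W)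
      ?_ ?_ ?_ ?_ hw
    · rintro v ⟨τ, rfl⟩
      exact Submodule.subset_span ⟨τ.trans σ, rfl⟩
    · show (fun i => σ ((0 : Fin n → K) i)) ∈ W
      have h0 : (fun i => σ ((0 : Fin n → K) i)) = 0 := by funext i; simp
      rw [h0]; exact zero_mem _
    · intro u v _ _ hu hv
      show (fun i => σ ((u + v) i)) ∈ W
      have h1 : (fun i => σ ((u + v) i)) = (fun i => σ (u i)) + (fun i => σ (v i)) := by
        funext i; simp
      rw [h1]; exact add_mem hu hv
    · intro cc v _ hv
      show (fun i => σ ((cc • v) i)) ∈ W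
      have h1 : (fun i => σ ((cc • v) i)) = σ cc • (fun i => σ (v i)) := by
        funext i; simp
      rw [h1]; exact Submodule.smul_mem _ _ hv
  set f : (Fin n → K) → ℕ := fun w => (Finset.univ.filter fun i => w i ≠ 0).card with hf
  set S : Set ℕ := {m | ∃ w, w ∈ W ∧ w ≠ 0 ∧ f w = m} with hSdef
  have habarW : abar ∈ W := Submodule.subset_span ⟨AlgEquiv.refl, by funext i; simp⟩
  have hS : S.Nonempty := ⟨f abar, abar, habarW, habar, rfl⟩
  obtain ⟨w, hwW, hw0, hwf⟩ := Nat.sInf_mem hS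
  obtain ⟨i0, hwi0⟩ := Function.ne_iff.mp hw0
  have hwi0' : w i0 ≠ 0 := hwi0
  set v : Fin n → K := (w i0)⁻¹ • w with hv
  have hvW : v ∈ W := Submodule.smul_mem _ _ hwW
  have hvi0 : v i0 = 1 := by simp [hv, inv_mul_cancel₀ hwi0']
  have hv0 : v ≠ 0 := fun h => by rw [h] at hvi0; simp at hvi0
  have hfilter : (Finset.univ.filter fun i => v i ≠ 0)
      = (Finset.univ.filter fun i => w i ≠ 0) := by
    apply Finset.filter_congr
    intro i _
    simp only [hv, Pi.smul_apply, smul_eq_mul, ne_eq, mul_eq_zero, not_or, inv_eq_zero]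
    constructor
    · rintro ⟨-, h2⟩; exact h2
    · intro h2; exact ⟨hwi0', h2⟩
  have hvsupp : f v = sInf S := by
    rw [← hwf]
    simp only [hf]
    rw [hfilter]
  have hfixed : ∀ (σ : K ≃ₐ[k] K) (i : Fin n), σ (v i) = v i := by
    intro σ
    set u : Fin n → K := (fun i => σ (v i)) - v with hu
    have huW : u ∈ W := sub_mem (hstab σ v hvW) hvW
    have hui0 : u i0 = 0 := by simp [hu, hvi0]
    by_contra hcon
    push_neg at hcon
    obtain ⟨i1, hi1⟩ := hcon
    have hu0 : u ≠ 0 := by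
      intro h
      apply hi1
      have := congrFun h i1
      simpa [hu, sub_eq_zero] using this
    have hsubset : (Finset.univ.filter fun i => u i ≠ 0)
        ⊆ (Finset.univ.filter fun i => v i ≠ 0).erase i0 := by
      intro i hi
      simp only [Finset.mem_filter, Finset.mem_univ, true_and, ne_eq] at hi
      refine Finset.mem_erase.mpr ⟨?_, ?_⟩
      · rintro rfl; exact hi hui0
      · simp only [Finset.mem_filter, Finset.mem_univ, true_and, ne_eq]
        intro hvi
        apply hi
        simp [hu, hvi]
    have hlt : f u < sInf S := by
      calc f u ≤ ((Finset.univ.filter fun i => v i ≠ 0).erase i0).card :=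
            Finset.card_le_card hsubset
        _ < (Finset.univ.filter fun i => v i ≠ 0).card := by
            refine Finset.card_erase_lt_of_mem ?_
            simp [hvi0]
        _ = sInf S := hvsupp
    exact absurd (Nat.sInf_le (show f u ∈ S from ⟨u, huW, hu0, rfl⟩))
      (Nat.not_le.mpr hlt)
  have hmem : ∀ i, ∃ y : k, algebraMap k K y = v i := by
    intro i
    obtain ⟨y, hy⟩ := AuxGD.fixed_mem_range (v i) (fun σ => hfixed σ i)
    exact ⟨y, hy⟩
  choose b hb using hmem
  refine ⟨b, ?_, ?_⟩
  · intro h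
    apply hv0
    funext i
    have := hb i
    rw [congrFun h i] at this
    simpa using this.symm
  · have h2 : (fun i => algebraMap k K (b i)) = v := funext hb
    rw [h2]
    exact hvW

end RationalVector

/-- Galois descent: over a perfect field `k`, if the single-form bound
`prk_k(P') ≤ Ã (prk_{k̄}(P') + 1)^{B̃}` holds for every multilinear form `P'`, then for
any family `P_1,...,P_n` with `r̄ = prk_{k̄}(P_1,...,P_n)` one has
`prk_k(P_1,...,P_n) ≤ Ã (n r̄ + 1)^{B̃}`. -/
theorem galois_descent_family_bound {k : Type*} [Field k] [PerfectField k]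
    {d : ℕ} (hd : 2 ≤ d) {s : Fin d → ℕ} (n : ℕ) (hn : 0 < n)
    (At Bt : ℕ)
    (hsingle : ∀ P' : MultilinearMap k (fun i : Fin d => Fin (s i) → k) k,
      prk P' ≤ At * (prk (extendForm (AlgebraicClosure k) P') + 1) ^ Bt)
    (P : Fin n → MultilinearMap k (fun i : Fin d => Fin (s i) → k) k)
    (rb : ℕ) (hr : cprk (fun l => extendForm (AlgebraicClosure k) (P l)) = rb) :
    cprk P ≤ At * (n * rb + 1) ^ Bt := by
  classical
  -- the collective rank over the closure is attained
  have hSbar : {r | ∃ a : Fin n → AlgebraicClosure k, a ≠ 0 ∧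
      HasPrkDecomp (∑ i, a i • extendForm (AlgebraicClosure k) (P i)) r}.Nonempty := by
    obtain ⟨r0, hr0⟩ := AuxGD.exists_hasPrkDecomp (K := AlgebraicClosure k) hd
      (∑ i, (Pi.single (⟨0, hn⟩ : Fin n) 1 : Fin n → AlgebraicClosure k) i • extendForm (AlgebraicClosure k) (P i))
    refine ⟨r0, Pi.single ⟨0, hn⟩ 1, ?_, hr0⟩
    intro h
    have := congrFun h ⟨0, hn⟩
    simp at this
  have hrb : rb ∈ {r | ∃ a : Fin n → AlgebraicClosure k, a ≠ 0 ∧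
      HasPrkDecomp (∑ i, a i • extendForm (AlgebraicClosure k) (P i)) r} := by
    rw [← hr]
    exact Nat.sInf_mem hSbar
  obtain ⟨abar, habar0, hdecomp⟩ := hrb
  -- a nonzero rational vector in the span of the Galois orbit of `abar`
  obtain ⟨b, hb0, hbW⟩ := AuxGD.exists_rational_vector (k := k) abar habar0
  set O : Set (Fin n → AlgebraicClosure k) :=
    {v : Fin n → AlgebraicClosure k | ∃ σ : AlgebraicClosure k ≃ₐ[k] AlgebraicClosure k, v = fun i => σ (abar i)} with hO
  -- a finite linearly independent spanning subset of the orbit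
  obtain ⟨sset, hsub, hspan, hli⟩ := exists_linearIndependent (AlgebraicClosure k) O
  have hfin : sset.Finite := hli.setFinite
  haveI := hfin.fintype
  have hcard : sset.toFinset.card ≤ n := by
    have h1 := hli.fintype_card_le_finrank
    rwa [← Set.toFinset_card, Module.finrank_fin_fun] at h1
  have hbW' : (fun i => algebraMap k (AlgebraicClosure k) (b i)) ∈ Submodule.span (AlgebraicClosure k) sset := by
    rw [hspan]; exact hbW
  obtain ⟨c, hcsupp, hcsum⟩ := Submodule.mem_span_set.mp hbW'
  -- each orbit element gives a combination of partition rank at most `rb`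
  have hgen : ∀ u ∈ O, HasPrkDecomp (∑ i, u i • extendForm (AlgebraicClosure k) (P i)) rb := by
    rintro u ⟨σ, rfl⟩
    have h2 := AuxGD.conjForm_hasPrkDecomp (σ : AlgebraicClosure k ≃+* AlgebraicClosure k) hdecomp
    have heq : AuxGD.conjForm (σ : AlgebraicClosure k ≃+* AlgebraicClosure k) (∑ i, abar i • extendForm (AlgebraicClosure k) (P i))
        = ∑ i, σ (abar i) • extendForm (AlgebraicClosure k) (P i) := by
      rw [AuxGD.conjForm_sum]
      refine Finset.sum_congr rfl fun i _ => ?_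
      rw [AuxGD.conjForm_smul, AuxGD.conjForm_extendForm]
      rfl
    rwa [heq] at h2
  -- rewrite the rational combination through the orbit elements
  have hcomb : (∑ i, algebraMap k (AlgebraicClosure k) (b i) • extendForm (AlgebraicClosure k) (P i))
      = ∑ u ∈ c.support, c u • ∑ i, u i • extendForm (AlgebraicClosure k) (P i) := by
    have hv : ∀ i, algebraMap k (AlgebraicClosure k) (b i) = ∑ u ∈ c.support, c u * u i := by
      intro i
      have h3 := congrFun hcsum i
      rw [← h3, Finsupp.sum]
      simp
    calc ∑ i, algebraMap k (AlgebraicClosure k) (b i) • extendForm (AlgebraicClosure k) (P i)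
        = ∑ i, ∑ u ∈ c.support, (c u * u i) • extendForm (AlgebraicClosure k) (P i) := by
          refine Finset.sum_congr rfl fun i _ => ?_
          rw [hv i, Finset.sum_smul]
      _ = ∑ u ∈ c.support, ∑ i, (c u * u i) • extendForm (AlgebraicClosure k) (P i) := Finset.sum_comm
      _ = _ := by
          refine Finset.sum_congr rfl fun u _ => ?_
          rw [Finset.smul_sum]
          refine Finset.sum_congr rfl fun i _ => ?_
          rw [smul_smul]
  have hdec2 : HasPrkDecomp (extendForm (AlgebraicClosure k) (∑ l, b l • P l)) (n * rb) := by
    rw [AuxGD.extendForm_sum_smul, hcomb]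
    have h3 := AuxGD.hasPrkDecomp_sum hd c.support
      (fun u => c u • ∑ i, u i • extendForm (AlgebraicClosure k) (P i)) rb
      (fun u hu => AuxGD.hasPrkDecomp_smul _ (hgen u (hsub (hcsupp hu))))
    refine AuxGD.hasPrkDecomp_mono hd h3 ?_
    have h4 : c.support.card ≤ n :=
      le_trans (Finset.card_le_card fun u hu => Set.mem_toFinset.mpr (hcsupp hu)) hcard
    exact Nat.mul_le_mul_right rb h4
  have hprk : prk (extendForm (AlgebraicClosure k) (∑ l, b l • P l)) ≤ n * rb := AuxGD.prk_le hdec2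
  have hfinal : prk (∑ l, b l • P l) ≤ At * (n * rb + 1) ^ Bt :=
    (hsingle _).trans (Nat.mul_le_mul_left At (Nat.pow_le_pow_left (by omega) Bt))
  have hmem2 : prk (∑ l, b l • P l) ∈
      {r | ∃ a : Fin n → k, a ≠ 0 ∧ HasPrkDecomp (∑ i, a i • P i) r} :=
    ⟨b, hb0, AuxGD.hasPrkDecomp_prk hd _⟩
  exact le_trans (Nat.sInf_le hmem2) hfinal
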